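/- Let |Φ₁⟩=(|00⟩+|11⟩)/√2, |Φ₂⟩=(|00⟩−|11⟩)/√2, |Φ₃⟩=(|01⟩−|10⟩)/√2, |Φ₄⟩=(|01⟩+|10⟩)/√2 be the magic basis of ℂ²⊗ℂ². A unit vector |ψ⟩ = Σⱼ αⱼ|Φⱼ⟩ with αⱼ ∈ ℂ is a product state (i.e., has Schmidt rank 1) if and only if α₁² − α₂² + α₃² − α₄² = 0. -/

import Mathlib

open Matrix

noncomputable section

abbrev QVec := Fin 2 → ℂ
abbrev QVec2 := Fin 2 × Fin 2 → ℂ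

def prodVec (v w : QVec) : QVec2 := fun p => v p.1 * w p.2

def IsProdState (ψ : QVec2) : Prop := ∃ v w : QVec, ψ = prodVec v w

/-- Computational basis vector `|a⟩|b⟩` of ℂ²⊗ℂ². -/
def ket (a b : Fin 2) : QVec2 := fun p => if p = (a, b) then 1 else 0

/-- The magic (Bell) basis of ℂ²⊗ℂ². -/
def magic : Fin 4 → QVec2
  | 0 => ((Real.sqrt 2 : ℂ))⁻¹ • (ket 0 0 + ket 1 1)
  | 1 => ((Real.sqrt 2 : ℂ))⁻¹ • (ket 0 0 - ket 1 1)
  | 2 => ((Real.sqrt 2 : ℂ))⁻¹ • (ket 0 1 - ket 1 0)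
  | 3 => ((Real.sqrt 2 : ℂ))⁻¹ • (ket 0 1 + ket 1 0)

lemma rank_one (a b c d : ℂ) (h : a * d = b * c) :
    ∃ v w : QVec, a = v 0 * w 0 ∧ b = v 0 * w 1 ∧ c = v 1 * w 0 ∧ d = v 1 * w 1 := by
  by_cases ha : a ≠ 0
  · refine ⟨![a, c], ![1, b / a], by simp, by simp; field_simp, by simp, ?_⟩
    simp only [Matrix.cons_val_one, Matrix.head_cons, Matrix.cons_val_zero]
    field_simp
    linear_combination h
  push_neg at ha
  by_cases hb : b ≠ 0
  · refine ⟨![b, d], ![a / b, 1], ?_, by simp, ?_, by simp⟩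
    · simp only [Matrix.cons_val_zero]; field_simp
    · simp only [Matrix.cons_val_one, Matrix.head_cons, Matrix.cons_val_zero]
      field_simp
      linear_combination -h
  push_neg at hb
  by_cases hc : c ≠ 0
  · refine ⟨![a, c], ![1, d / c], by simp, ?_, by simp, ?_⟩
    · simp only [Matrix.cons_val_zero, Matrix.cons_val_one, Matrix.head_cons]
      field_simp
      linear_combination -h
    · simp only [Matrix.cons_val_one, Matrix.head_cons, Matrix.cons_val_zero]; field_simp
  push_neg at hc
  exact ⟨![0, 1], ![0, d], by simp [ha], by simp [hb], by simp [hc], by simp⟩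

lemma isProd_iff_det (ψ : QVec2) :
    IsProdState ψ ↔ ψ (0,0) * ψ (1,1) = ψ (0,1) * ψ (1,0) := by
  constructor
  · rintro ⟨v, w, rfl⟩
    simp only [prodVec]
    ring
  · intro h
    obtain ⟨v, w, h1, h2, h3, h4⟩ :=
      rank_one (ψ (0,0)) (ψ (0,1)) (ψ (1,0)) (ψ (1,1)) (by linear_combination h)
    refine ⟨v, w, ?_⟩
    funext p
    obtain ⟨i, j⟩ := p
    fin_cases i <;> fin_cases j
    exacts [h1, h2, h3, h4]


/-- A unit vector `ψ = Σⱼ αⱼ |Φⱼ⟩` expanded in the magic basis is a product state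
iff `α₁² − α₂² + α₃² − α₄² = 0` (squares of complex numbers). -/
theorem product_iff_magic_coeffs (α : Fin 4 → ℂ)
    (hnorm : ∑ j, ‖α j‖ ^ 2 = 1) :
    IsProdState (∑ j, α j • magic j) ↔
      α 0 ^ 2 - α 1 ^ 2 + α 2 ^ 2 - α 3 ^ 2 = 0 := by
  have hs : ((Real.sqrt 2 : ℝ) : ℂ) ^ 2 = 2 := by
    norm_cast
    rw [Real.sq_sqrt] <;> norm_num
  have hs0 : ((Real.sqrt 2 : ℝ) : ℂ) ≠ 0 := by
    intro h
    rw [h] at hs; norm_num at hs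
  set ψ := ∑ j, α j • magic j with hψ
  have e00 : ψ (0,0) = (α 0 + α 1) * ((Real.sqrt 2 : ℂ))⁻¹ := by
    simp [hψ, Fin.sum_univ_four, magic, ket, Prod.ext_iff]; ring
  have e11 : ψ (1,1) = (α 0 - α 1) * ((Real.sqrt 2 : ℂ))⁻¹ := by
    simp [hψ, Fin.sum_univ_four, magic, ket, Prod.ext_iff]; ring
  have e01 : ψ (0,1) = (α 2 + α 3) * ((Real.sqrt 2 : ℂ))⁻¹ := by
    simp [hψ, Fin.sum_univ_four, magic, ket, Prod.ext_iff]; ring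
  have e10 : ψ (1,0) = (α 3 - α 2) * ((Real.sqrt 2 : ℂ))⁻¹ := by
    simp [hψ, Fin.sum_univ_four, magic, ket, Prod.ext_iff]; ring
  have key : (α 0 + α 1) * ((Real.sqrt 2 : ℂ))⁻¹ * ((α 0 - α 1) * ((Real.sqrt 2 : ℂ))⁻¹)
      - (α 2 + α 3) * ((Real.sqrt 2 : ℂ))⁻¹ * ((α 3 - α 2) * ((Real.sqrt 2 : ℂ))⁻¹)
      = (α 0 ^ 2 - α 1 ^ 2 + α 2 ^ 2 - α 3 ^ 2) / 2 := by
    field_simp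
    linear_combination (-(α 0 ^ 2 - α 1 ^ 2 + α 2 ^ 2 - α 3 ^ 2)) * hs
  rw [isProd_iff_det, e00, e11, e01, e10, ← sub_eq_zero, key, div_eq_zero_iff]
  simp
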